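/- Let G be a compact abelian Lie group and X a metrizable G-space that is a G-ANE. Then for every closed subgroup H ≤ G the invariant subspace X^{(H)} = G·X^H = {g·x : g ∈ G, x ∈ X^H}, equipped with the subspace topology and the restricted G-action, is a G-ANE. -/

import Mathlib

open scoped Manifold
open MulAction Set TopologicalSpace Topology

universe u v

/-- `G` is a compact Lie group: a compact topological group admitting a structure of a
finite-dimensional real smooth manifold in which multiplication and inversion are smooth. -/
def IsCompactLieGroup (G : Type*) [Group G] [TopologicalSpace G] : Prop :=
  CompactSpace G ∧ IsTopologicalGroup G ∧
    ∃ (n : ℕ) (cs : ChartedSpace (EuclideanSpace ℝ (Fin n)) G),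
      @LieGroup ℝ _ (EuclideanSpace ℝ (Fin n)) _ (EuclideanSpace ℝ (Fin n)) _ _ (𝓡 n) ((⊤ : ℕ∞) : WithTop ℕ∞) G _ _ cs

variable (G : Type u) [Group G] [TopologicalSpace G]

/-- A subset of a `G`-space is invariant if it is stable under the action. -/
def IsInvariantSet {Z : Type*} [SMul G Z] (A : Set Z) : Prop :=
  ∀ g : G, ∀ a ∈ A, g • a ∈ A

/-- A map is equivariant on a subset `A`. -/
def EquivariantOn {Z X : Type*} [SMul G Z] [SMul G X] (φ : Z → X) (A : Set Z) : Prop :=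
  ∀ g : G, ∀ a ∈ A, φ (g • a) = g • φ a

/-- The invariant subset `S` of the `G`-space `X`, with the subspace topology and restricted
action, is an equivariant absolute neighborhood extensor (`G`-ANE): every partial `G`-map from a
closed invariant subset of a metrizable `G`-space with values in `S` extends to a `G`-map of an
invariant neighborhood with values in `S`. -/
def IsGANESubset (X : Type v) [TopologicalSpace X] [MulAction G X] (S : Set X) : Prop :=
  ∀ (Z : Type u) [TopologicalSpace Z] [MulAction G Z], ContinuousSMul G Z →
    MetrizableSpace Z →
    ∀ A : Set Z, IsClosed A → IsInvariantSet G A →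
    ∀ φ : Z → X, ContinuousOn φ A → EquivariantOn G φ A → MapsTo φ A S →
    ∃ U : Set Z, IsOpen U ∧ IsInvariantSet G U ∧ A ⊆ U ∧
      ∃ ψ : Z → X, ContinuousOn ψ U ∧ EquivariantOn G ψ U ∧ MapsTo ψ U S ∧ EqOn ψ φ A

/-- The `G`-space `X` is an equivariant absolute neighborhood extensor (`G`-ANE). -/
def IsGANE (X : Type v) [TopologicalSpace X] [MulAction G X] : Prop :=
  IsGANESubset.{u, v} G X Set.univ

/-- The invariant subset `S` of the `G`-space `X` is an equivariant absolute extensor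
(`G`-AE): every partial `G`-map from a closed invariant subset of a metrizable `G`-space with
values in `S` extends to a `G`-map of the whole space with values in `S`. -/
def IsGAESubset (X : Type v) [TopologicalSpace X] [MulAction G X] (S : Set X) : Prop :=
  ∀ (Z : Type u) [TopologicalSpace Z] [MulAction G Z], ContinuousSMul G Z →
    MetrizableSpace Z →
    ∀ A : Set Z, IsClosed A → IsInvariantSet G A →
    ∀ φ : Z → X, ContinuousOn φ A → EquivariantOn G φ A → MapsTo φ A S →
    ∃ ψ : Z → X, Continuous ψ ∧ EquivariantOn G ψ Set.univ ∧ MapsTo ψ Set.univ S ∧ EqOn ψ φ A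

/-- A map is isovariant on `A`: it is equivariant there and preserves isotropy subgroups. -/
def IsovariantOn {Z X : Type*} [SMul G Z] [SMul G X] (φ : Z → X) (A : Set Z) : Prop :=
  EquivariantOn G φ A ∧ ∀ a ∈ A, ∀ g : G, g • a = a ↔ g • φ a = φ a

/-- The `G`-space `X` is an isovariant absolute extensor: every partial isovariant map from a
closed invariant subset of a metrizable `G`-space extends to an isovariant map of the whole
space. -/
def IsIsovAE (X : Type v) [TopologicalSpace X] [MulAction G X] : Prop :=
  ∀ (Z : Type u) [TopologicalSpace Z] [MulAction G Z], ContinuousSMul G Z →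
    MetrizableSpace Z →
    ∀ A : Set Z, IsClosed A → IsInvariantSet G A →
    ∀ φ : Z → X, ContinuousOn φ A → IsovariantOn G φ A →
    ∃ ψ : Z → X, Continuous ψ ∧ IsovariantOn G ψ Set.univ ∧ EqOn ψ φ A

/-- `(K) ≤ (H)`: the subgroup `K` is contained in some conjugate of `H`. -/
def SubConj (K H : Subgroup G) : Prop :=
  ∃ g : G, K ≤ Subgroup.map (MulAut.conj g).toMonoidHom H

/-- A family of orbit types: a conjugation-invariant set of closed subgroups of `G`. -/
def IsOrbitTypeFamily (𝒞 : Set (Subgroup G)) : Prop :=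
  (∀ H ∈ 𝒞, IsClosed (H : Set G)) ∧
    ∀ H ∈ 𝒞, ∀ g : G, Subgroup.map (MulAut.conj g).toMonoidHom H ∈ 𝒞

/-- The map induced on orbit spaces by an equivariant map. -/
def orbitMapOf {X Y : Type*} [MulAction G X] [MulAction G Y] (f : X → Y)
    (hf : ∀ (g : G) (x : X), f (g • x) = g • f x) :
    Quotient (orbitRel G X) → Quotient (orbitRel G Y) :=
  Quotient.map f (fun a b hab => by
    have hab' : a ∈ orbit G b := hab
    obtain ⟨g, rfl⟩ := hab'
    show f (g • b) ∈ orbit G (f b)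
    exact ⟨g, (hf g b).symm⟩)

/-- An equivariant continuous map is an equigeny if the induced map of orbit spaces is a
homeomorphism. -/
def IsEquigeny {X Y : Type*} [TopologicalSpace X] [TopologicalSpace Y]
    [MulAction G X] [MulAction G Y] (f : X → Y) : Prop :=
  Continuous f ∧ ∃ hf : ∀ (g : G) (x : X), f (g • x) = g • f x,
    IsHomeomorph (orbitMapOf G f hf)

/-- The `G`-space `X` is an equivariant absolute extensor (`G`-AE). -/
def IsGAE (X : Type v) [TopologicalSpace X] [MulAction G X] : Prop :=
  IsGAESubset.{u, v} G X Set.univ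

/-- The problem of extending the equigeny `h : 𝕏 → 𝕏'` over the ambient `G`-space `𝕐 ⊇ 𝕏`
(where `𝕏` sits in `𝕐` via the equivariant embedding `j`) has a `𝒞`-solution: there are a
`G`-space `𝕐'` of orbit type `𝒞`, a closed equivariant embedding `e : 𝕏' → 𝕐'` and an
equigeny `H : 𝕐 → 𝕐'` extending `h`. -/
def SolvesEquigenyExt (𝒞 : Set (Subgroup G))
    (𝕐 : Type u) [TopologicalSpace 𝕐] [MulAction G 𝕐]
    (𝕏 : Type u) [TopologicalSpace 𝕏] [MulAction G 𝕏] (j : 𝕏 → 𝕐)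
    (𝕏' : Type u) [TopologicalSpace 𝕏'] [MulAction G 𝕏'] (h : 𝕏 → 𝕏') : Prop :=
  ∃ (𝕐' : Type u) (_ : TopologicalSpace 𝕐') (_ : MulAction G 𝕐'),
    ContinuousSMul G 𝕐' ∧ (∀ y : 𝕐', MulAction.stabilizer G y ∈ 𝒞) ∧
    ∃ e : 𝕏' → 𝕐', IsClosedEmbedding e ∧ (∀ (g : G) (x : 𝕏'), e (g • x) = g • e x) ∧
      ∃ H : 𝕐 → 𝕐', IsEquigeny G H ∧ H ∘ j = e ∘ h

/-- Variant of `SolvesEquigenyExt` in which `𝕏'` is required to be embedded onto an *open*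
invariant subset of `𝕐'`. -/
def SolvesEquigenyExtOpen (𝒞 : Set (Subgroup G))
    (𝕐 : Type u) [TopologicalSpace 𝕐] [MulAction G 𝕐]
    (𝕏 : Type u) [TopologicalSpace 𝕏] [MulAction G 𝕏] (j : 𝕏 → 𝕐)
    (𝕏' : Type u) [TopologicalSpace 𝕏'] [MulAction G 𝕏'] (h : 𝕏 → 𝕏') : Prop :=
  ∃ (𝕐' : Type u) (_ : TopologicalSpace 𝕐') (_ : MulAction G 𝕐'),
    ContinuousSMul G 𝕐' ∧ (∀ y : 𝕐', MulAction.stabilizer G y ∈ 𝒞) ∧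
    ∃ e : 𝕏' → 𝕐', IsOpenEmbedding e ∧ IsInvariantSet G (Set.range e) ∧
      (∀ (g : G) (x : 𝕏'), e (g • x) = g • e x) ∧
      ∃ H : 𝕐 → 𝕐', IsEquigeny G H ∧ H ∘ j = e ∘ h

section MurayamaAux

set_option linter.unusedSectionVars false

variable {G : Type u} [CommGroup G] {Z : Type u} [MulAction G Z]

/-- The setoid of `H`-orbits on a `G`-space (`G` abelian). -/
def murSetoid (H : Subgroup G) (Z : Type u) [MulAction G Z] : Setoid Z where
  r a b := ∃ h ∈ H, a = h • b
  iseqv := by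
    refine ⟨fun a => ⟨1, H.one_mem, (one_smul G a).symm⟩, ?_, ?_⟩
    · rintro a b ⟨h, hh, rfl⟩
      exact ⟨h⁻¹, H.inv_mem hh, (inv_smul_smul h b).symm⟩
    · rintro a b c ⟨h, hh, rfl⟩ ⟨k, hk, rfl⟩
      exact ⟨h * k, H.mul_mem hh hk, (mul_smul h k c).symm⟩

theorem murSetoid_iff {H : Subgroup G} {a b : Z} :
    murSetoid H Z a b ↔ ∃ h ∈ H, a = h • b := Iff.rfl

/-- The `G`-action on the quotient by `H`-orbits, for abelian `G`. -/
def murAction (H : Subgroup G) (Z : Type u) [MulAction G Z] :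
    MulAction G (Quotient (murSetoid H Z)) where
  smul g := Quot.map (fun z => g • z) (by
    rintro a b ⟨h, hh, rfl⟩
    exact ⟨h, hh, by simp only [smul_smul, mul_comm g h]⟩)
  one_smul q := Quotient.inductionOn q fun z =>
    congrArg (Quotient.mk (murSetoid H Z)) (one_smul G z)
  mul_smul g₁ g₂ q := Quotient.inductionOn q fun z =>
    congrArg (Quotient.mk (murSetoid H Z)) (mul_smul g₁ g₂ z)


theorem murMk_isOpenMap [TopologicalSpace Z] [ContinuousConstSMul G Z] (H : Subgroup G) :
    IsOpenMap (Quotient.mk (murSetoid H Z)) := by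
  intro V hV
  have hq : IsQuotientMap (Quotient.mk (murSetoid H Z)) := isQuotientMap_quot_mk
  rw [← hq.isOpen_preimage]
  have he : (Quotient.mk (murSetoid H Z)) ⁻¹' ((Quotient.mk (murSetoid H Z)) '' V) =
      ⋃ h ∈ (H : Set G), (fun z : Z => h • z) '' V := by
    ext z
    simp only [Set.mem_preimage, Set.mem_image, Set.mem_iUnion, SetLike.mem_coe]
    constructor
    · rintro ⟨v, hv, hvz⟩
      obtain ⟨h, hh, heq⟩ : ∃ h ∈ H, v = h • z := Quotient.exact hvz
      exact ⟨h⁻¹, H.inv_mem hh, v, hv, by rw [heq, inv_smul_smul]⟩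
    · rintro ⟨h, hh, v, hv, rfl⟩
      exact ⟨v, hv, (Quotient.sound ⟨h, hh, rfl⟩ :
        Quotient.mk (murSetoid H Z) (h • v) = Quotient.mk (murSetoid H Z) v).symm⟩
  rw [he]
  exact isOpen_biUnion fun h _ => isOpenMap_smul h V hV

/-- A distance function compatible with the topology. -/
structure IsCompatDist (Z : Type u) [TopologicalSpace Z] (d : Z → Z → ℝ) : Prop where
  self : ∀ x, d x x = 0
  comm : ∀ x y, d x y = d y x
  triangle : ∀ x y z, d x z ≤ d x y + d y z
  cont : Continuous fun p : Z × Z => d p.1 p.2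
  isOpen_iff : ∀ s : Set Z, IsOpen s ↔ ∀ x ∈ s, ∃ ε > 0, ∀ y, d x y < ε → y ∈ s

theorem IsCompatDist.nonneg {Z : Type u} [TopologicalSpace Z] {d : Z → Z → ℝ}
    (hd : IsCompatDist Z d) (x y : Z) : 0 ≤ d x y := by
  have h1 := hd.triangle x y x
  have h2 := hd.self x
  have h3 := hd.comm y x
  linarith

/-- Truncated distance. -/
def murD0 (d : Z → Z → ℝ) (x y : Z) : ℝ := min (d x y) 1

/-- `H`-invariant truncated distance (sup over the compact group `H`). -/
noncomputable def murDt (H : Subgroup G) (d : Z → Z → ℝ) (x y : Z) : ℝ :=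
  sSup ((fun h : G => murD0 d (h • x) (h • y)) '' (H : Set G))

/-- The quotient distance on the space of `H`-orbits. -/
noncomputable def murF (H : Subgroup G) (d : Z → Z → ℝ) (x y : Z) : ℝ :=
  sInf ((fun h : G => murDt H d x (h • y)) '' (H : Set G))

section DistLemmas

variable [TopologicalSpace Z] {d : Z → Z → ℝ} (hd : IsCompatDist Z d)
variable (H : Subgroup G)

include hd

theorem murD0_nonneg (x y : Z) : 0 ≤ murD0 d x y :=
  le_min (hd.nonneg x y) zero_le_one

theorem murD0_le_one (x y : Z) : murD0 d x y ≤ 1 := min_le_right _ _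

theorem murD0_self (x : Z) : murD0 d x x = 0 := by
  simp [murD0, hd.self x]

theorem murD0_comm (x y : Z) : murD0 d x y = murD0 d y x := by
  simp [murD0, hd.comm x y]

theorem murD0_triangle (x y z : Z) : murD0 d x z ≤ murD0 d x y + murD0 d y z := by
  unfold murD0
  rcases le_total 1 (d x y) with h1 | h1
  · have h2 := min_le_right (d x z) 1
    have h3 : (0:ℝ) ≤ min (d y z) 1 := le_min (hd.nonneg y z) zero_le_one
    rw [min_eq_right h1]
    linarith
  · rcases le_total 1 (d y z) with h2 | h2
    · have h3 := min_le_right (d x z) 1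
      have h4 : (0:ℝ) ≤ min (d x y) 1 := le_min (hd.nonneg x y) zero_le_one
      rw [min_eq_right h2]
      linarith
    · rw [min_eq_left h1, min_eq_left h2]
      exact le_trans (min_le_left _ _) (hd.triangle x y z)

omit hd

theorem murD0_lt {x y : Z} {ε : ℝ} (h : murD0 d x y < ε) (hε : ε ≤ 1) : d x y < ε := by
  have h1 : d x y < 1 := by
    rcases min_lt_iff.1 (lt_of_lt_of_le h hε) with h' | h'
    · exact h'
    · linarith
  have h' : min (d x y) 1 < ε := h
  rwa [min_eq_left h1.le] at h'

theorem murDt_bddAbove (x y : Z) :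
    BddAbove ((fun h : G => murD0 d (h • x) (h • y)) '' (H : Set G)) := by
  refine ⟨1, ?_⟩
  rintro r ⟨h, hh, rfl⟩
  exact min_le_right _ _

theorem murDt_nonempty (x y : Z) :
    ((fun h : G => murD0 d (h • x) (h • y)) '' (H : Set G)).Nonempty :=
  ⟨_, Set.mem_image_of_mem _ H.one_mem⟩

include hd

theorem murD0_le_murDt (x y : Z) : murD0 d x y ≤ murDt H d x y := by
  have h1 : murD0 d ((1:G) • x) ((1:G) • y) ≤ murDt H d x y :=
    le_csSup (murDt_bddAbove H x y) (Set.mem_image_of_mem _ H.one_mem)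
  simpa [one_smul] using h1

theorem murDt_nonneg (x y : Z) : 0 ≤ murDt H d x y :=
  le_trans (murD0_nonneg hd x y) (murD0_le_murDt hd H x y)

theorem murDt_self (x : Z) : murDt H d x x = 0 := by
  refine le_antisymm (Real.sSup_le ?_ le_rfl) (murDt_nonneg hd H x x)
  rintro r ⟨h, hh, rfl⟩
  exact le_of_eq (murD0_self hd (h • x))

theorem murDt_comm (x y : Z) : murDt H d x y = murDt H d y x := by
  unfold murDt
  congr 1
  ext r
  simp only [Set.mem_image, SetLike.mem_coe]
  constructor
  · rintro ⟨h, hh, rfl⟩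
    exact ⟨h, hh, (murD0_comm hd _ _).symm⟩
  · rintro ⟨h, hh, rfl⟩
    exact ⟨h, hh, murD0_comm hd _ _⟩

theorem murDt_le {x y : Z} {h : G} (hh : h ∈ H) :
    murD0 d (h • x) (h • y) ≤ murDt H d x y :=
  le_csSup (murDt_bddAbove H x y) (Set.mem_image_of_mem _ hh)

theorem murDt_triangle (x y z : Z) : murDt H d x z ≤ murDt H d x y + murDt H d y z := by
  refine Real.sSup_le ?_ (add_nonneg (murDt_nonneg hd H x y) (murDt_nonneg hd H y z))
  rintro r ⟨h, hh, rfl⟩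
  calc murD0 d (h • x) (h • z) ≤ murD0 d (h • x) (h • y) + murD0 d (h • y) (h • z) :=
        murD0_triangle hd _ _ _
    _ ≤ murDt H d x y + murDt H d y z :=
        add_le_add (murDt_le hd H hh) (murDt_le hd H hh)

omit hd

theorem murDt_smul {k : G} (hk : k ∈ H) (x y : Z) :
    murDt H d (k • x) (k • y) = murDt H d x y := by
  unfold murDt
  congr 1
  ext r
  simp only [Set.mem_image, SetLike.mem_coe]
  constructor
  · rintro ⟨h, hh, rfl⟩
    exact ⟨h * k, H.mul_mem hh hk, by rw [mul_smul, mul_smul]⟩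
  · rintro ⟨h, hh, rfl⟩
    refine ⟨h * k⁻¹, H.mul_mem hh (H.inv_mem hk), ?_⟩
    rw [smul_smul, smul_smul, inv_mul_cancel_right]

include hd

theorem murDt_tube [TopologicalSpace G] [CompactSpace G] [ContinuousSMul G Z]
    (hH : IsClosed (H : Set G)) (z : Z) {ε : ℝ} (hε : 0 < ε) :
    ∃ V : Set Z, IsOpen V ∧ z ∈ V ∧ ∀ y ∈ V, murDt H d z y < ε := by
  have hf : Continuous fun p : G × Z => murD0 d (p.1 • z) (p.1 • p.2) := by
    apply Continuous.min _ continuous_const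
    exact hd.cont.comp
      (((continuous_fst.smul continuous_const)).prodMk (continuous_fst.smul continuous_snd))
  have hsub : (H : Set G) ×ˢ ({z} : Set Z) ⊆
      (fun p : G × Z => murD0 d (p.1 • z) (p.1 • p.2)) ⁻¹' (Set.Iio (ε / 2)) := by
    rintro ⟨h, y⟩ ⟨hh, hy⟩
    have hyz : y = z := hy
    simp only [Set.mem_preimage, Set.mem_Iio, hyz]
    rw [murD0_self hd]
    exact half_pos hε
  obtain ⟨u, v, hu, hv, hHu, hzv, huv⟩ :=
    generalized_tube_lemma hH.isCompact isCompact_singleton (isOpen_Iio.preimage hf) hsub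
  refine ⟨v, hv, hzv rfl, fun y hy => ?_⟩
  have h1 : murDt H d z y ≤ ε / 2 := by
    refine Real.sSup_le ?_ (half_pos hε).le
    rintro r ⟨h, hh, rfl⟩
    exact le_of_lt (huv (Set.mk_mem_prod (hHu hh) hy))
  linarith

omit hd

include hd

theorem murF_bddBelow (x y : Z) :
    BddBelow ((fun h : G => murDt H d x (h • y)) '' (H : Set G)) := by
  refine ⟨0, ?_⟩
  rintro r ⟨h, hh, rfl⟩
  exact murDt_nonneg hd H x (h • y)

omit hd

theorem murF_nonempty (x y : Z) :
    ((fun h : G => murDt H d x (h • y)) '' (H : Set G)).Nonempty :=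
  ⟨_, Set.mem_image_of_mem _ H.one_mem⟩

include hd

theorem murF_le {x y : Z} {h : G} (hh : h ∈ H) : murF H d x y ≤ murDt H d x (h • y) :=
  csInf_le (murF_bddBelow hd H x y) (Set.mem_image_of_mem _ hh)

theorem murF_nonneg (x y : Z) : 0 ≤ murF H d x y :=
  le_csInf (murF_nonempty H x y) (by rintro r ⟨h, hh, rfl⟩; exact murDt_nonneg hd H x (h • y))

theorem murF_self (x : Z) : murF H d x x = 0 := by
  refine le_antisymm ?_ (murF_nonneg hd H x x)
  have h1 := murF_le hd H (x := x) (y := x) H.one_mem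
  rwa [one_smul, murDt_self hd] at h1

theorem murF_comm (x y : Z) : murF H d x y = murF H d y x := by
  have key : ∀ a b : Z, ∀ h : G, h ∈ H → murDt H d a (h • b) = murDt H d b (h⁻¹ • a) := by
    intro a b h hh
    calc murDt H d a (h • b) = murDt H d (h⁻¹ • a) (h⁻¹ • (h • b)) :=
          (murDt_smul H (H.inv_mem hh) a (h • b)).symm
      _ = murDt H d (h⁻¹ • a) b := by rw [inv_smul_smul]
      _ = murDt H d b (h⁻¹ • a) := murDt_comm hd H _ _
  unfold murF
  congr 1
  ext r
  simp only [Set.mem_image, SetLike.mem_coe]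
  constructor
  · rintro ⟨h, hh, rfl⟩
    exact ⟨h⁻¹, H.inv_mem hh, (key x y h hh).symm⟩
  · rintro ⟨h, hh, rfl⟩
    refine ⟨h⁻¹, H.inv_mem hh, ?_⟩
    rw [key y x h hh]

theorem murF_triangle (x y z : Z) : murF H d x z ≤ murF H d x y + murF H d y z := by
  refine le_of_forall_pos_le_add fun ε hε => ?_
  obtain ⟨r, hrmem, hr⟩ := Real.lt_sInf_add_pos (murF_nonempty H x y) (half_pos hε)
  obtain ⟨h, hh, rfl⟩ := hrmem
  obtain ⟨r', hrmem', hr'⟩ := Real.lt_sInf_add_pos (murF_nonempty H y z) (half_pos hε)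
  obtain ⟨h', hh', rfl⟩ := hrmem'
  have e1 : murDt H d (h • y) ((h * h') • z) = murDt H d y (h' • z) := by
    rw [mul_smul]
    exact murDt_smul H hh y (h' • z)
  have h2 : murF H d x z ≤ murDt H d x ((h * h') • z) := murF_le hd H (H.mul_mem hh hh')
  have h3 : murDt H d x ((h * h') • z) ≤ murDt H d x (h • y) + murDt H d y (h' • z) := by
    have := murDt_triangle hd H x (h • y) ((h * h') • z)
    rwa [e1] at this
  have h4 : murDt H d x (h • y) < murF H d x y + ε / 2 := hr
  have h5 : murDt H d y (h' • z) < murF H d y z + ε / 2 := hr'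
  linarith

theorem murF_eq_zero [TopologicalSpace G] [CompactSpace G] [T2Space Z] [ContinuousSMul G Z]
    (hH : IsClosed (H : Set G)) {x y : Z} (hxy : murF H d x y = 0) : murSetoid H Z x y := by
  have hKc : IsCompact ((fun h : G => h • y) '' (H : Set G)) :=
    hH.isCompact.image (continuous_id.smul continuous_const)
  have hxK : x ∈ (fun h : G => h • y) '' (H : Set G) := by
    by_contra hx
    obtain ⟨ε, hε, hb⟩ := (hd.isOpen_iff _).1 hKc.isClosed.isOpen_compl x hx
    have hε' : 0 < min ε 1 := lt_min hε one_pos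
    obtain ⟨r, hrmem, hr⟩ := Real.lt_sInf_add_pos (murF_nonempty H x y) hε'
    obtain ⟨h, hh, rfl⟩ := hrmem
    have h0 : sInf ((fun h : G => murDt H d x (h • y)) '' (H : Set G)) = 0 := hxy
    rw [h0, zero_add] at hr
    have h1 : murD0 d x (h • y) < min ε 1 := lt_of_le_of_lt (murD0_le_murDt hd H x (h • y)) hr
    have h2 : d x (h • y) < min ε 1 := murD0_lt h1 (min_le_right _ _)
    have h3 : h • y ∈ ((fun h : G => h • y) '' (H : Set G))ᶜ :=
      hb _ (lt_of_lt_of_le h2 (min_le_left _ _))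
    exact h3 (Set.mem_image_of_mem _ hh)
  obtain ⟨h, hh, hxe⟩ := hxK
  exact ⟨h, hh, hxe.symm⟩

/-- The quotient of a "metrized" `G`-space by the orbits of a compact subgroup is metrizable. -/
theorem murQ_metrizable [TopologicalSpace G] [CompactSpace G] [T2Space Z] [ContinuousSMul G Z]
    (hH : IsClosed (H : Set G)) :
    TopologicalSpace.MetrizableSpace (Quotient (murSetoid H Z)) := by
  have hπ : IsQuotientMap (Quotient.mk (murSetoid H Z)) := isQuotientMap_quot_mk
  have hres : ∀ a b a' b' : Z, murSetoid H Z a a' → murSetoid H Z b b' →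
      murF H d a b = murF H d a' b' := by
    have hright : ∀ (x y : Z) (k : G), k ∈ H → murF H d x (k • y) = murF H d x y := by
      intro x y k hk
      unfold murF
      congr 1
      ext r
      simp only [Set.mem_image, SetLike.mem_coe]
      constructor
      · rintro ⟨h, hh, rfl⟩
        exact ⟨h * k, H.mul_mem hh hk, by rw [mul_smul]⟩
      · rintro ⟨h, hh, rfl⟩
        refine ⟨h * k⁻¹, H.mul_mem hh (H.inv_mem hk), ?_⟩
        rw [smul_smul, inv_mul_cancel_right]
    have hleft : ∀ (x y : Z) (k : G), k ∈ H → murF H d (k • x) y = murF H d x y := by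
      intro x y k hk
      unfold murF
      congr 1
      ext r
      simp only [Set.mem_image, SetLike.mem_coe]
      constructor
      · rintro ⟨h, hh, rfl⟩
        refine ⟨k⁻¹ * h, H.mul_mem (H.inv_mem hk) hh, ?_⟩
        rw [← murDt_smul H hk x ((k⁻¹ * h) • y), smul_smul, mul_inv_cancel_left]
      · rintro ⟨h, hh, rfl⟩
        refine ⟨k * h, H.mul_mem hk hh, ?_⟩
        rw [mul_smul]
        exact murDt_smul H hk x (h • y)
    rintro a b a' b' ⟨h, hh, rfl⟩ ⟨k, hk, rfl⟩
    rw [hleft _ _ _ hh, hright _ _ _ hk]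
  letI m : MetricSpace (Quotient (murSetoid H Z)) := by
    refine MetricSpace.ofDistTopology (Quotient.lift₂ (murF H d) hres) ?_ ?_ ?_ ?_ ?_
    · exact fun q => Quotient.inductionOn q fun x => murF_self hd H x
    · exact fun q p => Quotient.inductionOn₂ q p fun x y => murF_comm hd H x y
    · exact fun q p o => Quotient.inductionOn₃ q p o fun x y z => murF_triangle hd H x y z
    · intro t
      constructor
      · intro ht q hq
        obtain ⟨x, rfl⟩ := Quotient.exists_rep q
        obtain ⟨ε₀, hε₀, hball⟩ :=
          (hd.isOpen_iff _).1 (ht.preimage hπ.continuous) x hq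
        refine ⟨min ε₀ 1, lt_min hε₀ one_pos, ?_⟩
        intro p hp
        obtain ⟨y, rfl⟩ := Quotient.exists_rep p
        have hp' : murF H d x y < min ε₀ 1 := hp
        obtain ⟨r, hrmem, hrlt⟩ := exists_lt_of_csInf_lt (murF_nonempty H x y) hp'
        obtain ⟨h, hh, rfl⟩ := hrmem
        have h1 : murD0 d x (h • y) < min ε₀ 1 :=
          lt_of_le_of_lt (murD0_le_murDt hd H x (h • y)) hrlt
        have h2 : d x (h • y) < ε₀ :=
          lt_of_lt_of_le (murD0_lt h1 (min_le_right _ _)) (min_le_left _ _)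
        have h4 : Quotient.mk (murSetoid H Z) (h • y) ∈ t := hball _ h2
        have h5 : Quotient.mk (murSetoid H Z) (h • y) = Quotient.mk (murSetoid H Z) y :=
          Quotient.sound ⟨h, hh, rfl⟩
        rwa [h5] at h4
      · intro hloc
        rw [← hπ.isOpen_preimage]
        rw [isOpen_iff_mem_nhds]
        intro x hx
        obtain ⟨ε, hε, hball⟩ := hloc (Quotient.mk (murSetoid H Z) x) hx
        obtain ⟨V, hVo, hxV, hV⟩ := murDt_tube hd H hH x hε
        refine Filter.mem_of_superset (hVo.mem_nhds hxV) fun y hy => ?_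
        have h1 : murF H d x y ≤ murDt H d x y := by
          have h2 := murF_le hd H (x := x) (y := y) H.one_mem
          rwa [one_smul] at h2
        exact hball _ (lt_of_le_of_lt h1 (hV y hy))
    · intro q p
      refine Quotient.inductionOn₂ q p fun x y hxy => ?_
      exact Quotient.sound (murF_eq_zero hd H hH hxy)
  exact inferInstance

end DistLemmas

end MurayamaAux
/-- **Murayama's theorem (abelian case).** If `G` is a compact abelian Lie group and `X` is a
metrizable `G`-space which is a `G`-ANE, then for every closed subgroup `H ≤ G` the invariant
subspace `X^{(H)} = G ⬝ X^H` is a `G`-ANE. -/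
theorem murayama_abelian (G : Type u) [CommGroup G] [TopologicalSpace G]
    (hG : IsCompactLieGroup G)
    (X : Type v) [TopologicalSpace X] [MulAction G X] [MetrizableSpace X]
    (hX : ContinuousSMul G X) (hANE : IsGANE.{u, v} G X)
    (H : Subgroup G) (hH : IsClosed (H : Set G)) :
    IsGANESubset.{u, v} G X
      {x : X | ∃ (g : G) (y : X), (∀ h ∈ H, h • y = y) ∧ x = g • y} := by
  classical
  obtain ⟨hGc, hGt, -⟩ := hG
  haveI := hGc
  intro Z _ _ hZc hZm A hAcl hAinv φ hφc hφe hφS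
  haveI := hZc
  haveI := hZm
  -- The invariant set is exactly the set of `H`-fixed points, since `G` is abelian.
  have hSfix : ∀ x : X, x ∈ {x : X | ∃ (g : G) (y : X), (∀ h ∈ H, h • y = y) ∧ x = g • y} →
      ∀ h ∈ H, h • x = x := by
    rintro x ⟨g, y, hy, rfl⟩ h hh
    rw [smul_smul, mul_comm, ← smul_smul, hy h hh]
  have hfixS : ∀ x : X, (∀ h ∈ H, h • x = x) →
      x ∈ {x : X | ∃ (g : G) (y : X), (∀ h ∈ H, h • y = y) ∧ x = g • y} :=
    fun x hx => ⟨1, x, hx, (one_smul G x).symm⟩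
  -- The quotient of `Z` by the `H`-action.
  letI : MulAction G (Quotient (murSetoid H Z)) := murAction H Z
  set π : Z → Quotient (murSetoid H Z) := Quotient.mk (murSetoid H Z) with hπdef
  have hπ : IsQuotientMap π := isQuotientMap_quot_mk
  have hπo : IsOpenMap π := murMk_isOpenMap H
  -- Continuity of the `G`-action on `Q`.
  haveI hQcs : ContinuousSMul G (Quotient (murSetoid H Z)) := by
    constructor
    have hq2 : IsQuotientMap (Prod.map (id : G → G) π) :=
      (IsOpenMap.id.prodMap hπo).isQuotientMap (continuous_id.prodMap hπ.continuous)
        (Function.surjective_id.prodMap hπ.surjective)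
    rw [hq2.continuous_iff]
    have he : ((fun p : G × Quotient (murSetoid H Z) => p.1 • p.2) ∘
        Prod.map (id : G → G) π) = fun p : G × Z => π (p.1 • p.2) := rfl
    rw [he]
    exact hπ.continuous.comp continuous_smul
  -- Metrizability of `Q`.
  letI : MetricSpace Z := TopologicalSpace.metrizableSpaceMetric Z
  have hd : IsCompatDist Z dist := by
    refine ⟨dist_self, dist_comm, dist_triangle, continuous_dist, fun s => ?_⟩
    constructor
    · intro hs x hx
      obtain ⟨ε, hε, hb⟩ := Metric.isOpen_iff.1 hs x hx
      exact ⟨ε, hε, fun y hy => hb (Metric.mem_ball.2 (by rw [dist_comm]; exact hy))⟩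
    · intro hs
      refine Metric.isOpen_iff.2 fun x hx => ?_
      obtain ⟨ε, hε, hb⟩ := hs x hx
      exact ⟨ε, hε, fun y hy => hb y (by have h5 := Metric.mem_ball.1 hy; rwa [dist_comm] at h5)⟩
  haveI hQm : MetrizableSpace (Quotient (murSetoid H Z)) := murQ_metrizable hd H hH
  -- The closed invariant set `A' = π '' A` in `Q`.
  set A' : Set (Quotient (murSetoid H Z)) := π '' A with hA'def
  have hsat : π ⁻¹' A' = A := by
    apply Set.Subset.antisymm
    · rintro z ⟨a, ha, hza⟩
      obtain ⟨h, hh, he⟩ : ∃ h ∈ H, a = h • z := Quotient.exact hza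
      have hz : z = h⁻¹ • a := by rw [he, inv_smul_smul]
      rw [hz]
      exact hAinv h⁻¹ a ha
    · intro z hz
      exact Set.mem_image_of_mem π hz
  have hA'cl : IsClosed A' := hπ.isClosed_preimage.1 (by rw [hsat]; exact hAcl)
  have hA'inv : IsInvariantSet G A' := by
    rintro g p ⟨a, ha, rfl⟩
    exact ⟨g • a, hAinv g a ha, rfl⟩
  -- The descended map `φ' : Q → X`.
  set φ' : Quotient (murSetoid H Z) → X := fun q => φ (Quotient.out q) with hφ'def
  have hout : ∀ z : Z, ∃ h ∈ H, Quotient.out (π z) = h • z :=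
    fun z => Quotient.mk_out (s := murSetoid H Z) z
  have hkey : ∀ z ∈ A, φ' (π z) = φ z := by
    intro z hz
    obtain ⟨h, hh, he⟩ := hout z
    show φ (Quotient.out (π z)) = φ z
    rw [he, hφe h z hz]
    exact hSfix (φ z) (hφS hz) h hh
  have hφ'c : ContinuousOn φ' A' := by
    rintro p ⟨z, hz, rfl⟩
    have hφz : φ' (π z) = φ z := hkey z hz
    show Filter.Tendsto φ' (nhdsWithin (π z) A') (nhds (φ' (π z)))
    rw [hφz, Filter.tendsto_def]
    intro O hO
    obtain ⟨O', hO'sub, hO'o, hO'mem⟩ := mem_nhds_iff.1 hO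
    have h1 : φ ⁻¹' O' ∈ nhdsWithin z A := hφc z hz (hO'o.mem_nhds hO'mem)
    obtain ⟨V, hVo, hzV, hVsub⟩ := mem_nhdsWithin.1 h1
    refine mem_nhdsWithin.2 ⟨π '' (⋃ h ∈ (H : Set G), (fun w : Z => h • w) '' V), ?_, ?_, ?_⟩
    · exact hπo _ (isOpen_biUnion fun h _ => isOpenMap_smul h V hVo)
    · exact Set.mem_image_of_mem π (Set.mem_biUnion H.one_mem ⟨z, hzV, one_smul G z⟩)
    · rintro p ⟨⟨v, hv, hvp⟩, a, ha, rfl⟩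
      simp only [Set.mem_iUnion, SetLike.mem_coe, Set.mem_image] at hv
      obtain ⟨h, hh, w, hw, rfl⟩ := hv
      have h3 : π w = π a :=
        ((Quotient.sound ⟨h, hh, rfl⟩ : π (h • w) = π w)).symm.trans hvp
      obtain ⟨k, hk, hwk⟩ : ∃ k ∈ H, w = k • a := Quotient.exact h3
      have hwA : w ∈ A := by rw [hwk]; exact hAinv k a ha
      have hwO : φ w ∈ O' := hVsub ⟨hw, hwA⟩
      show φ' (π a) ∈ O
      rw [← h3, hkey w hwA]
      exact hO'sub hwO
  have hφ'e : EquivariantOn G φ' A' := by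
    rintro g p ⟨z, hz, rfl⟩
    have h1 : g • π z = π (g • z) := rfl
    rw [h1, hkey (g • z) (hAinv g z hz), hkey z hz, hφe g z hz]
  -- Apply the `G`-ANE property of `X` over `Q`.
  obtain ⟨U', hU'o, hU'inv, hAU', ψ', hψ'c, hψ'e, -, hψ'φ'⟩ :=
    hANE (Quotient (murSetoid H Z)) hQcs hQm A' hA'cl hA'inv φ' hφ'c hφ'e (Set.mapsTo_univ φ' A')
  have htriv : ∀ h : G, h ∈ H → ∀ q : Quotient (murSetoid H Z), h • q = q := by
    intro h hh q
    obtain ⟨z, rfl⟩ := Quotient.exists_rep q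
    exact Quotient.sound ⟨h, hh, rfl⟩
  refine ⟨π ⁻¹' U', hU'o.preimage hπ.continuous, ?_, ?_, fun z => ψ' (π z), ?_, ?_, ?_, ?_⟩
  · intro g z hz
    exact hU'inv g (π z) hz
  · intro z hz
    exact hAU' (Set.mem_image_of_mem π hz)
  · exact hψ'c.comp hπ.continuous.continuousOn fun z hz => hz
  · intro g z hz
    exact hψ'e g (π z) hz
  · intro z hz
    refine hfixS (ψ' (π z)) fun h hh => ?_
    rw [← hψ'e h (π z) hz, htriv h hh (π z)]
  · intro z hz
    show ψ' (π z) = φ z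
    rw [hψ'φ' (Set.mem_image_of_mem π hz), hkey z hz]
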